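/- Let ρ_1,…,ρ_d be nonzero complex numbers and λ∈ℂ. If d≥3, then the Laurent polynomial Σ_{j=1}^d ( ρ_j z_j + 1/(ρ_j z_j) ) + λ in the variables z_1,…,z_d is irreducible. If d=2 and λ≠0, then ρ_1 z_1 + 1/(ρ_1 z_1) + ρ_2 z_2 + 1/(ρ_2 z_2) + λ is irreducible. -/

import Mathlib

noncomputable section

/-- The discrete Laplacian on `ℤ^d`: `(Δu)(n) = Σ_{‖n'-n‖₁ = 1} u(n')`. -/
def discLap {d : ℕ} (u : (Fin d → ℤ) → ℂ) (n : Fin d → ℤ) : ℂ :=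
  ∑ j : Fin d, (u (Function.update n j (n j + 1)) + u (Function.update n j (n j - 1)))

/-- Reduction of an integer modulo `q`, as an element of `Fin q`. -/
def fem (q : ℕ+) (a : ℤ) : Fin (q : ℕ) :=
  ⟨(a % ((q : ℕ) : ℤ)).toNat, by
    have hq : (0:ℤ) < ((q : ℕ) : ℤ) := by exact_mod_cast q.pos
    have h1 : 0 ≤ a % ((q : ℕ) : ℤ) := Int.emod_nonneg a (ne_of_gt hq)
    have h2 : a % ((q : ℕ) : ℤ) < ((q : ℕ) : ℤ) := Int.emod_lt_of_pos a hq
    omega⟩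

/-- Extension of a function on the fundamental domain `W` to `ℤ^d` using the
Floquet boundary conditions `u(n + qⱼ eⱼ) = zⱼ u(n)`. -/
def extendBC {d : ℕ} (q : Fin d → ℕ+) (z : Fin d → ℂ)
    (u : (∀ j, Fin ((q j : ℕ))) → ℂ) : (Fin d → ℤ) → ℂ :=
  fun n => (∏ j, z j ^ (n j / ((q j : ℕ) : ℤ))) * u (fun j => fem (q j) (n j))

/-- The matrix `D_V(z)` of the Floquet reduction of `-Δ + V` to the fundamental domain. -/
def DVmat {d : ℕ} (q : Fin d → ℕ+) (V : (Fin d → ℤ) → ℂ) (z : Fin d → ℂ) :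
    Matrix (∀ j, Fin ((q j : ℕ))) (∀ j, Fin ((q j : ℕ))) ℂ :=
  fun n n' =>
    -(discLap (extendBC q z (Pi.single n' 1)) (fun j => ((n j : ℕ) : ℤ)))
      + V (fun j => ((n j : ℕ) : ℤ)) * (if n = n' then 1 else 0)

/-- `𝒫_V(z, λ) = det(D_V(z) - λ I)`. -/
def scriptP {d : ℕ} (q : Fin d → ℕ+) (V : (Fin d → ℤ) → ℂ) (z : Fin d → ℂ)
    (lam : ℂ) : ℂ :=
  Matrix.det (DVmat q V z - lam • (1 : Matrix (∀ j, Fin ((q j : ℕ))) (∀ j, Fin ((q j : ℕ))) ℂ))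

/-- `Γ`-periodicity for a complex-valued function on `ℤ^d`. -/
def IsPeriodic {d : ℕ} (q : Fin d → ℕ+) (V : (Fin d → ℤ) → ℂ) : Prop :=
  ∀ (n : Fin d → ℤ) (j : Fin d), V (Function.update n j (n j + ((q j : ℕ) : ℤ))) = V n

/-- `Γ`-periodicity for a real-valued function on `ℤ^d`. -/
def IsPeriodicR {d : ℕ} (q : Fin d → ℕ+) (V : (Fin d → ℤ) → ℝ) : Prop :=
  ∀ (n : Fin d → ℤ) (j : Fin d), V (Function.update n j (n j + ((q j : ℕ) : ℤ))) = V n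

/-- `ρ_m = e^{2πi m / q}`. -/
def rho (q : ℕ+) (m : ℕ) : ℂ :=
  Complex.exp (2 * (Real.pi : ℂ) * Complex.I * (m : ℂ) / ((q : ℕ) : ℂ))

/-- The discrete Fourier transform `V̂(l)` of a periodic potential. -/
def dft {d : ℕ} (q : Fin d → ℕ+) (V : (Fin d → ℤ) → ℂ) (l : Fin d → ℤ) : ℂ :=
  (1 / ((∏ j, (q j : ℕ) : ℕ) : ℂ)) * ∑ n : (∀ j, Fin ((q j : ℕ))),
    V (fun j => ((n j : ℕ) : ℤ)) *
      Complex.exp (-(2 * (Real.pi : ℂ) * Complex.I) * ∑ j, (l j : ℂ) * ((n j : ℕ) : ℂ) / ((q j : ℕ) : ℂ))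

/-- The diagonal matrix `A(z)` with entries `-Σⱼ (ρʲ_{nⱼ} zⱼ + 1/(ρʲ_{nⱼ} zⱼ))`. -/
def Amat {d : ℕ} (q : Fin d → ℕ+) (z : Fin d → ℂ) :
    Matrix (∀ j, Fin ((q j : ℕ))) (∀ j, Fin ((q j : ℕ))) ℂ :=
  Matrix.diagonal fun n => -(∑ j, (rho (q j) (n j) * z j + (rho (q j) (n j) * z j)⁻¹))

/-- The matrix `B_V` with entries `V̂(n - n')`. -/
def Bmat {d : ℕ} (q : Fin d → ℕ+) (V : (Fin d → ℤ) → ℂ) :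
    Matrix (∀ j, Fin ((q j : ℕ))) (∀ j, Fin ((q j : ℕ))) ℂ :=
  fun n n' => dft q V (fun j => ((n j : ℕ) : ℤ) - ((n' j : ℕ) : ℤ))

/-- The average `[V]` of a periodic potential. -/
def avgPot {d : ℕ} (q : Fin d → ℕ+) (V : (Fin d → ℤ) → ℂ) : ℂ :=
  (1 / ((∏ j, (q j : ℕ) : ℕ) : ℂ)) * ∑ n : (∀ j, Fin ((q j : ℕ))), V (fun j => ((n j : ℕ) : ℤ))

/-- The Fermi variety `F_λ(V)`. -/
def FermiVariety {d : ℕ} (q : Fin d → ℕ+) (V : (Fin d → ℤ) → ℂ) (lam : ℂ) :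
    Set (Fin d → ℂ) :=
  {k | ∃ u : (Fin d → ℤ) → ℂ, u ≠ 0 ∧
    (∀ n, -(discLap u n) + V n * u n = lam * u n) ∧
    (∀ (n : Fin d → ℤ) (j : Fin d),
      u (Function.update n j (n j + ((q j : ℕ) : ℤ)))
        = Complex.exp (2 * (Real.pi : ℂ) * Complex.I * k j) * u n)}

/-- Floquet isospectrality of two real periodic potentials. -/
def FloquetIso {d : ℕ} (q : Fin d → ℕ+) (V Y : (Fin d → ℤ) → ℝ) : Prop :=
  ∀ k : Fin d → ℝ,
    spectrum ℂ (DVmat q (fun n => ((V n : ℝ) : ℂ))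
        (fun j => Complex.exp (2 * (Real.pi : ℂ) * Complex.I * (k j : ℂ))))
      = spectrum ℂ (DVmat q (fun n => ((Y n : ℝ) : ℂ))
        (fun j => Complex.exp (2 * (Real.pi : ℂ) * Complex.I * (k j : ℂ))))

/-- A function on `(ℂ^*)^d` given by a Laurent polynomial. -/
def IsLaurent {d : ℕ} (f : (Fin d → ℂ) → ℂ) : Prop :=
  ∃ c : (Fin d → ℤ) →₀ ℂ, ∀ z : Fin d → ℂ, (∀ j, z j ≠ 0) →
    f z = c.sum fun a C => C * ∏ j, z j ^ a j

/-- A Laurent monomial `C z₁^{a₁} ⋯ z_d^{a_d}` with `C ≠ 0`. -/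
def IsMonomial {d : ℕ} (f : (Fin d → ℂ) → ℂ) : Prop :=
  ∃ (C : ℂ) (a : Fin d → ℤ), C ≠ 0 ∧ ∀ z : Fin d → ℂ, (∀ j, z j ≠ 0) →
    f z = C * ∏ j, z j ^ a j

/-- Irreducibility of a Laurent polynomial: no factorization into two non-monomial
Laurent polynomials. -/
def LaurentIrreducible {d : ℕ} (h : (Fin d → ℂ) → ℂ) : Prop :=
  ¬ ∃ f g : (Fin d → ℂ) → ℂ, IsLaurent f ∧ IsLaurent g ∧
      ¬ IsMonomial f ∧ ¬ IsMonomial g ∧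
      ∀ z : Fin d → ℂ, (∀ j, z j ≠ 0) → h z = f z * g z

namespace St8

variable {d : ℕ}

abbrev GG (d : ℕ) := Fin d → ℤ
abbrev AA (d : ℕ) := AddMonoidAlgebra ℂ (GG d)

/-- The character `z ↦ ∏ z_j^{a_j}` with `z` given as units. -/
def chi (w : Fin d → ℂˣ) : Multiplicative (GG d) →* ℂ where
  toFun a := ∏ j, ((w j ^ (Multiplicative.toAdd a j) : ℂˣ) : ℂ)
  map_one' := by simp
  map_mul' a b := by
    simp only [toAdd_mul, Pi.add_apply, zpow_add, Units.val_mul, Finset.prod_mul_distrib]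

def Ehom (w : Fin d → ℂˣ) : AA d →ₐ[ℂ] ℂ := AddMonoidAlgebra.lift ℂ ℂ (GG d) (chi w)

lemma Ehom_apply (w : Fin d → ℂˣ) (c : AA d) :
    Ehom w c = c.coeff.sum fun a C => C * ∏ j, ((w j ^ a j : ℂˣ) : ℂ) := by
  rw [Ehom, AddMonoidAlgebra.lift_apply]
  exact Finsupp.sum_congr fun a _ => by rw [smul_eq_mul]; rfl

lemma E_eq (z : Fin d → ℂ) (hz : ∀ j, z j ≠ 0) (c : AA d) :
    (c.coeff.sum fun a C => C * ∏ j, z j ^ a j)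
      = Ehom (fun j => Units.mk0 (z j) (hz j)) c := by
  rw [Ehom_apply]
  refine Finsupp.sum_congr fun a _ => ?_
  congr 1
  refine Finset.prod_congr rfl fun j _ => ?_
  rw [Units.val_zpow_eq_zpow_val]
  rfl

def psi (a : GG d) : (Fin d → ℂˣ) →* ℂ where
  toFun w := ∏ j, ((w j ^ a j : ℂˣ) : ℂ)
  map_one' := by simp
  map_mul' w v := by
    simp only [Pi.mul_apply, mul_zpow, Units.val_mul, Finset.prod_mul_distrib]

lemma psi_injective : Function.Injective (psi (d := d)) := by
  intro a b hab
  funext j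
  have h := congrArg (fun F : (Fin d → ℂˣ) →* ℂ =>
    F (Function.update (1 : Fin d → ℂˣ) j (Units.mk0 (2:ℂ) two_ne_zero))) hab
  simp only [psi, MonoidHom.coe_mk, OneHom.coe_mk] at h
  have hval : ∀ n : ℤ, (((Units.mk0 (2:ℂ) two_ne_zero) ^ n : ℂˣ) : ℂ) = ((2:ℝ)^n : ℝ) := by
    intro n
    rw [Units.val_zpow_eq_zpow_val, Complex.ofReal_zpow]
    norm_num
  have hcomp : ∀ c : GG d, (∏ j', (((Function.update (1 : Fin d → ℂˣ) j
      (Units.mk0 (2:ℂ) two_ne_zero)) j' ^ c j' : ℂˣ) : ℂ)) = ((2:ℝ) ^ c j : ℝ) := by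
    intro c
    rw [Finset.prod_eq_single j]
    · rw [Function.update_self, hval]
    · intro j' _ hj'
      rw [Function.update_of_ne hj']
      simp
    · simp
  rw [hcomp, hcomp] at h
  have h' : (2:ℝ) ^ a j = (2:ℝ) ^ b j := by exact_mod_cast h
  exact zpow_right_injective₀ (by norm_num) (by norm_num) h'

lemma rep_injective (c : AA d) (hc : ∀ w : Fin d → ℂˣ, Ehom w c = 0) : c = 0 := by
  classical
  have li := linearIndependent_monoidHom (Fin d → ℂˣ) ℂ
  rw [linearIndependent_iff] at li
  have hl : Finsupp.linearCombination ℂ (fun f : ((Fin d → ℂˣ) →* ℂ) => ⇑f)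
      (Finsupp.mapDomain psi c.coeff) = 0 := by
    rw [Finsupp.linearCombination_apply]
    have hmd : (Finsupp.mapDomain psi c.coeff).sum (fun i (a : ℂ) => a • ⇑i)
        = c.coeff.sum fun a m => m • ⇑(psi a) :=
      Finsupp.sum_mapDomain_index (fun b => zero_smul ℂ (⇑b))
        (fun b m₁ m₂ => add_smul m₁ m₂ (⇑b))
    rw [hmd]
    funext w
    have h := hc w
    rw [Ehom_apply, Finsupp.sum] at h
    rw [Finsupp.sum, Finset.sum_apply]
    simpa [psi, smul_eq_mul] using h
  have := li _ hl
  exact AddMonoidAlgebra.coeff_eq_zero.1 (Finsupp.mapDomain_injective psi_injective (by rw [this, Finsupp.mapDomain_zero]))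

lemma rep_eq {c c' : AA d} (h : ∀ w : Fin d → ℂˣ, Ehom w c = Ehom w c') : c = c' := by
  have := rep_injective (c - c') (fun w => by rw [map_sub, h w, sub_self])
  exact sub_eq_zero.mp this


/-- `Finsupp.filter`, but staying in the monoid algebra type. -/
def fil (p : GG d → Prop) [DecidablePred p] (x : AA d) : AA d := AddMonoidAlgebra.ofCoeff (Finsupp.filter p x.coeff)

lemma fil_apply (p : GG d → Prop) [DecidablePred p] (x : AA d) (a : GG d) :
    (fil p x).coeff a = if p a then x.coeff a else 0 := Finsupp.filter_apply p x.coeff a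

lemma fil_add (p : GG d → Prop) [DecidablePred p] (x y : AA d) :
    fil p (x + y) = fil p x + fil p y := by
  simp only [fil, AddMonoidAlgebra.coeff_add, Finsupp.filter_add, AddMonoidAlgebra.ofCoeff_add]

lemma fil_eq_self_of {p : GG d → Prop} [DecidablePred p] {x : AA d}
    (h : ∀ a ∈ x.coeff.support, p a) : fil p x = x := by
  ext a
  rw [fil_apply]
  split_ifs with hp
  · rfl
  · symm; rw [← Finsupp.notMem_support_iff]; exact fun hs => hp (h a hs)

lemma fil_eq_zero_of {p : GG d → Prop} [DecidablePred p] {x : AA d}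
    (h : ∀ a ∈ x.coeff.support, ¬ p a) : fil p x = 0 := by
  ext a
  rw [fil_apply, AddMonoidAlgebra.coeff_zero, Finsupp.coe_zero, Pi.zero_apply]
  split_ifs with hp
  · rw [← Finsupp.notMem_support_iff]; exact fun hs => h a hs hp
  · rfl

lemma fil_congr {p q : GG d → Prop} [DecidablePred p] [DecidablePred q] {x : AA d}
    (h : ∀ a ∈ x.coeff.support, (p a ↔ q a)) : fil p x = fil q x := by
  ext a
  rw [fil_apply, fil_apply]
  by_cases hs : a ∈ x.coeff.support
  · rw [if_congr (h a hs) rfl rfl]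
  · rw [Finsupp.notMem_support_iff] at hs
    rw [hs, ite_self, ite_self]

lemma fil_pos_add_neg (p : GG d → Prop) [DecidablePred p] (x : AA d) :
    fil p x + fil (fun a => ¬ p a) x = x := by
  rw [← AddMonoidAlgebra.coeff_inj]; exact Finsupp.filter_pos_add_filter_neg x.coeff p

lemma mem_support_fil {p : GG d → Prop} [DecidablePred p] {x : AA d} {a : GG d}
    (ha : a ∈ (fil p x).coeff.support) : a ∈ x.coeff.support ∧ p a := by
  have := ha
  rw [fil, AddMonoidAlgebra.coeff_ofCoeff, Finsupp.support_filter, Finset.mem_filter] at this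
  exact this

lemma mem_support_mul {x y : AA d} {a : GG d} (ha : a ∈ (x * y).coeff.support) :
    ∃ b ∈ x.coeff.support, ∃ c ∈ y.coeff.support, b + c = a := by
  classical
  exact Finset.mem_add.1 (AddMonoidAlgebra.support_coeff_mul_subset x y ha)

lemma top_mul (π : GG d →+ ℤ) (x y : AA d) (Dx Dy : ℤ)
    (hx : ∀ a ∈ x.coeff.support, π a ≤ Dx) (hy : ∀ a ∈ y.coeff.support, π a ≤ Dy) :
    fil (fun a => π a = Dx + Dy) (x * y)
      = fil (fun a => π a = Dx) x * fil (fun a => π a = Dy) y := by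
  classical
  have hdecomp : x * y = fil (fun a => π a = Dx) x * fil (fun a => π a = Dy) y
      + (fil (fun a => π a = Dx) x * fil (fun a => ¬ π a = Dy) y
      + (fil (fun a => ¬ π a = Dx) x * fil (fun a => π a = Dy) y
      + fil (fun a => ¬ π a = Dx) x * fil (fun a => ¬ π a = Dy) y)) := by
    calc x * y = (fil (fun a => π a = Dx) x + fil (fun a => ¬ π a = Dx) x)
        * (fil (fun a => π a = Dy) y + fil (fun a => ¬ π a = Dy) y) := by
          rw [fil_pos_add_neg, fil_pos_add_neg]
      _ = _ := by ring
  rw [hdecomp, fil_add, fil_add, fil_add]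
  have hTT : fil (fun a => π a = Dx + Dy)
      (fil (fun a => π a = Dx) x * fil (fun a => π a = Dy) y)
      = fil (fun a => π a = Dx) x * fil (fun a => π a = Dy) y := by
    refine fil_eq_self_of fun a ha => ?_
    obtain ⟨b, hb, c, hc, rfl⟩ := mem_support_mul ha
    rw [map_add, (mem_support_fil hb).2, (mem_support_fil hc).2]
  have hTR : fil (fun a => π a = Dx + Dy)
      (fil (fun a => π a = Dx) x * fil (fun a => ¬ π a = Dy) y) = 0 := by
    refine fil_eq_zero_of fun a ha => ?_
    obtain ⟨b, hb, c, hc, rfl⟩ := mem_support_mul ha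
    obtain ⟨hbx, hbp⟩ := mem_support_fil hb
    obtain ⟨hcy, hcp⟩ := mem_support_fil hc
    have := hy c hcy
    rw [map_add, hbp]
    omega
  have hRT : fil (fun a => π a = Dx + Dy)
      (fil (fun a => ¬ π a = Dx) x * fil (fun a => π a = Dy) y) = 0 := by
    refine fil_eq_zero_of fun a ha => ?_
    obtain ⟨b, hb, c, hc, rfl⟩ := mem_support_mul ha
    obtain ⟨hbx, hbp⟩ := mem_support_fil hb
    obtain ⟨hcy, hcp⟩ := mem_support_fil hc
    have := hx b hbx
    rw [map_add, hcp]
    omega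
  have hRR : fil (fun a => π a = Dx + Dy)
      (fil (fun a => ¬ π a = Dx) x * fil (fun a => ¬ π a = Dy) y) = 0 := by
    refine fil_eq_zero_of fun a ha => ?_
    obtain ⟨b, hb, c, hc, rfl⟩ := mem_support_mul ha
    obtain ⟨hbx, hbp⟩ := mem_support_fil hb
    obtain ⟨hcy, hcp⟩ := mem_support_fil hc
    have h1 := hx b hbx
    have h2 := hy c hcy
    rw [map_add]
    omega
  rw [hTT, hTR, hRT, hRR]
  simp

lemma fil_ne_zero_of_mem {p : GG d → Prop} [DecidablePred p] {x : AA d}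
    (h : ∃ a ∈ x.coeff.support, p a) : fil p x ≠ 0 := by
  obtain ⟨a, ha, hpa⟩ := h
  intro h0
  have h1 : (fil p x).coeff a = x.coeff a := by rw [fil_apply, if_pos hpa]
  rw [h0, AddMonoidAlgebra.coeff_zero, Finsupp.coe_zero, Pi.zero_apply] at h1
  exact Finsupp.mem_support_iff.1 ha h1.symm

lemma top_mul_mem (π : GG d →+ ℤ) (x y : AA d) (Dx Dy : ℤ)
    (hx : ∀ a ∈ x.coeff.support, π a ≤ Dx) (hy : ∀ a ∈ y.coeff.support, π a ≤ Dy)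
    (hx' : ∃ a ∈ x.coeff.support, π a = Dx) (hy' : ∃ a ∈ y.coeff.support, π a = Dy) :
    ∃ a ∈ (x * y).coeff.support, π a = Dx + Dy := by
  classical
  have h := top_mul π x y Dx Dy hx hy
  have hne : fil (fun a => π a = Dx + Dy) (x * y) ≠ 0 := by
    rw [h]
    exact mul_ne_zero (fil_ne_zero_of_mem hx') (fil_ne_zero_of_mem hy')
  obtain ⟨a, ha⟩ := Finsupp.support_nonempty_iff.2 (AddMonoidAlgebra.coeff_eq_zero.not.2 hne)
  exact ⟨a, (mem_support_fil ha).1, (mem_support_fil ha).2⟩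

lemma bot_mul (π : GG d →+ ℤ) (x y : AA d) (Dx Dy : ℤ)
    (hx : ∀ a ∈ x.coeff.support, Dx ≤ π a) (hy : ∀ a ∈ y.coeff.support, Dy ≤ π a) :
    fil (fun a => π a = Dx + Dy) (x * y)
      = fil (fun a => π a = Dx) x * fil (fun a => π a = Dy) y := by
  classical
  have h := top_mul (-π) x y (-Dx) (-Dy)
    (fun a ha => by rw [AddMonoidHom.neg_apply]; have := hx a ha; omega)
    (fun a ha => by rw [AddMonoidHom.neg_apply]; have := hy a ha; omega)
  have e1 : fil (fun a => (-π) a = -Dx + -Dy) (x * y)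
      = fil (fun a => π a = Dx + Dy) (x * y) :=
    fil_congr fun a _ => by rw [AddMonoidHom.neg_apply]; omega
  have e2 : fil (fun a => (-π) a = -Dx) x = fil (fun a => π a = Dx) x :=
    fil_congr fun a _ => by rw [AddMonoidHom.neg_apply]; omega
  have e3 : fil (fun a => (-π) a = -Dy) y = fil (fun a => π a = Dy) y :=
    fil_congr fun a _ => by rw [AddMonoidHom.neg_apply]; omega
  rw [e1, e2, e3] at h
  exact h

lemma bot_mul_mem (π : GG d →+ ℤ) (x y : AA d) (Dx Dy : ℤ)
    (hx : ∀ a ∈ x.coeff.support, Dx ≤ π a) (hy : ∀ a ∈ y.coeff.support, Dy ≤ π a)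
    (hx' : ∃ a ∈ x.coeff.support, π a = Dx) (hy' : ∃ a ∈ y.coeff.support, π a = Dy) :
    ∃ a ∈ (x * y).coeff.support, π a = Dx + Dy := by
  have h := top_mul_mem (-π) x y (-Dx) (-Dy)
    (fun a ha => by rw [AddMonoidHom.neg_apply]; have := hx a ha; omega)
    (fun a ha => by rw [AddMonoidHom.neg_apply]; have := hy a ha; omega)
    (by obtain ⟨a, ha, h'⟩ := hx'; exact ⟨a, ha, by rw [AddMonoidHom.neg_apply]; omega⟩)
    (by obtain ⟨a, ha, h'⟩ := hy'; exact ⟨a, ha, by rw [AddMonoidHom.neg_apply]; omega⟩)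
  obtain ⟨a, ha, h'⟩ := h
  rw [AddMonoidHom.neg_apply] at h'
  exact ⟨a, ha, by omega⟩

lemma exists_bounds (π : GG d →+ ℤ) {x : AA d} (hx : x ≠ 0) :
    ∃ M m : ℤ, m ≤ M ∧ (∀ a ∈ x.coeff.support, π a ≤ M ∧ m ≤ π a)
      ∧ (∃ a ∈ x.coeff.support, π a = M) ∧ (∃ a ∈ x.coeff.support, π a = m) := by
  have hne : x.coeff.support.Nonempty := Finsupp.support_nonempty_iff.2 (AddMonoidAlgebra.coeff_eq_zero.not.2 hx)
  have hne' : (x.coeff.support.image ⇑π).Nonempty := hne.image _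
  refine ⟨(x.coeff.support.image ⇑π).max' hne', (x.coeff.support.image ⇑π).min' hne', ?_, ?_, ?_, ?_⟩
  · exact Finset.min'_le _ _ ((x.coeff.support.image ⇑π).max'_mem hne')
  · intro a ha
    exact ⟨Finset.le_max' _ _ (Finset.mem_image_of_mem _ ha),
      Finset.min'_le _ _ (Finset.mem_image_of_mem _ ha)⟩
  · obtain ⟨a, ha, h'⟩ := Finset.mem_image.1 ((x.coeff.support.image ⇑π).max'_mem hne')
    exact ⟨a, ha, h'⟩
  · obtain ⟨a, ha, h'⟩ := Finset.mem_image.1 ((x.coeff.support.image ⇑π).min'_mem hne')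
    exact ⟨a, ha, h'⟩

lemma eq_single_of_mul_eq_single {x y : AA d} {a0 : GG d} {C0 : ℂ} (hC0 : C0 ≠ 0)
    (h : x * y = AddMonoidAlgebra.single a0 C0) :
    (∃ α A, A ≠ 0 ∧ x = AddMonoidAlgebra.single α A)
      ∧ (∃ β B, B ≠ 0 ∧ y = AddMonoidAlgebra.single β B) := by
  classical
  have hxy : x * y ≠ 0 := by
    rw [h]
    intro h0
    exact hC0 (AddMonoidAlgebra.single_eq_zero.1 h0)
  have hx : x ≠ 0 := fun h' => hxy (by rw [h', zero_mul])
  have hy : y ≠ 0 := fun h' => hxy (by rw [h', mul_zero])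
  have hsupp : (x * y).coeff.support = {a0} := by
    rw [h]; exact Finsupp.support_single_ne_zero a0 hC0
  have key : ∀ (u v : AA d), u ≠ 0 → v ≠ 0 → u * v = x * y →
      ∃ α A, A ≠ 0 ∧ u = AddMonoidAlgebra.single α A := by
    intro u v hu hv huv
    have hconst : ∀ j : Fin d, ∀ a ∈ u.coeff.support, ∀ b ∈ u.coeff.support, a j = b j := by
      intro j a ha b hb
      set π : GG d →+ ℤ := Pi.evalAddMonoidHom (fun _ : Fin d => ℤ) j with hπ
      obtain ⟨Mu, mu, hmM, hbd, hexM, hexm⟩ := exists_bounds π hu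
      obtain ⟨Mv, mv, hmMv, hbdv, hexMv, hexmv⟩ := exists_bounds π hv
      have htop := top_mul_mem π u v Mu Mv (fun a ha => (hbd a ha).1)
        (fun a ha => (hbdv a ha).1) hexM hexMv
      have hbot := bot_mul_mem π u v mu mv (fun a ha => (hbd a ha).2)
        (fun a ha => (hbdv a ha).2) hexm hexmv
      rw [huv] at htop hbot
      obtain ⟨c, hc, hc'⟩ := htop
      obtain ⟨c', hc2, hc2'⟩ := hbot
      rw [hsupp, Finset.mem_singleton] at hc hc2
      subst hc; subst hc2
      have h1 := (hbd a ha).1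
      have h2 := (hbd a ha).2
      have h3 := (hbd b hb).1
      have h4 := (hbd b hb).2
      have h5 : π a = π b := by omega
      simpa [hπ] using h5
    obtain ⟨α, hα⟩ := Finsupp.support_nonempty_iff.2 (AddMonoidAlgebra.coeff_eq_zero.not.2 hu)
    have hsing : u.coeff.support = {α} := by
      refine Finset.eq_singleton_iff_unique_mem.2 ⟨hα, fun b hb => ?_⟩
      funext j
      exact hconst j b hb α hα
    obtain ⟨hne, heq⟩ := Finsupp.support_eq_singleton.1 hsing
    exact ⟨α, u.coeff α, hne, AddMonoidAlgebra.coeff_injective heq⟩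
  exact ⟨key x y hx hy rfl, by
    obtain ⟨β, B, hB, h'⟩ := key y x hy hx (mul_comm y x)
    exact ⟨β, B, hB, h'⟩⟩


def ee (d : ℕ) (j : Fin d) : GG d := Pi.single j (1:ℤ)

lemma ee_apply (j i : Fin d) : ee d j i = if i = j then 1 else 0 := Pi.single_apply j 1 i

lemma ee_inj {j k : Fin d} (h : ee d j = ee d k) : j = k := by
  by_contra hne
  have h' := congrFun h j
  rw [ee_apply, if_pos rfl, ee_apply, if_neg hne] at h'
  exact one_ne_zero h'

lemma ee_ne_zero (k : Fin d) : ee d k ≠ 0 := by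
  intro h
  have h' := congrFun h k
  rw [ee_apply, if_pos rfl] at h'
  exact one_ne_zero h'

lemma ee_ne_neg (j k : Fin d) : ee d j ≠ -(ee d k) := by
  intro h
  have h' := congrFun h j
  rw [ee_apply, if_pos rfl, Pi.neg_apply, ee_apply] at h'
  split_ifs at h' <;> omega

/-- The Laurent polynomial `Σ_j (ρ_j z_j + (ρ_j z_j)⁻¹) + λ` as a finsupp. -/
def chP (ρ : Fin d → ℂ) (lam : ℂ) : AA d :=
  (∑ j, AddMonoidAlgebra.single (ee d j) (ρ j))
    + (∑ j, AddMonoidAlgebra.single (-(ee d j)) ((ρ j)⁻¹))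
    + AddMonoidAlgebra.single (0 : GG d) lam

lemma chP_apply (ρ : Fin d → ℂ) (lam : ℂ) (a : GG d) :
    (chP ρ lam).coeff a = (∑ j, if ee d j = a then ρ j else 0)
      + (∑ j, if -(ee d j) = a then (ρ j)⁻¹ else 0)
      + (if (0 : GG d) = a then lam else 0) := by
  rw [chP, AddMonoidAlgebra.coeff_add, AddMonoidAlgebra.coeff_add, AddMonoidAlgebra.coeff_sum,
    AddMonoidAlgebra.coeff_sum, Finsupp.add_apply, Finsupp.add_apply, Finsupp.finset_sum_apply,
    Finsupp.finset_sum_apply, AddMonoidAlgebra.coeff_single, Finsupp.single_apply]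
  congr 1
  · congr 1
    · exact Finset.sum_congr rfl fun j _ => Finsupp.single_apply
    · exact Finset.sum_congr rfl fun j _ => Finsupp.single_apply

lemma chP_at_ee (ρ : Fin d → ℂ) (lam : ℂ) (k : Fin d) : (chP ρ lam).coeff (ee d k) = ρ k := by
  rw [chP_apply]
  have h1 : (∑ j, if ee d j = ee d k then ρ j else 0) = ρ k := by
    have he : ∀ j : Fin d, (ee d j = ee d k) = (j = k) :=
      fun j => propext ⟨fun h => ee_inj h, fun h => by rw [h]⟩
    simp only [he]
    simp
  have h2 : (∑ j, if -(ee d j) = ee d k then (ρ j)⁻¹ else 0) = 0 :=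
    Finset.sum_eq_zero fun j _ => if_neg fun h => ee_ne_neg k j h.symm
  have h3 : (if (0 : GG d) = ee d k then lam else 0) = 0 :=
    if_neg fun h => ee_ne_zero k h.symm
  rw [h1, h2, h3, add_zero, add_zero]

lemma chP_at_neg_ee (ρ : Fin d → ℂ) (lam : ℂ) (k : Fin d) :
    (chP ρ lam).coeff (-(ee d k)) = (ρ k)⁻¹ := by
  rw [chP_apply]
  have h1 : (∑ j, if ee d j = -(ee d k) then ρ j else 0) = 0 :=
    Finset.sum_eq_zero fun j _ => if_neg (ee_ne_neg j k)
  have h2 : (∑ j, if -(ee d j) = -(ee d k) then (ρ j)⁻¹ else 0) = (ρ k)⁻¹ := by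
    have he : ∀ j : Fin d, (-(ee d j) = -(ee d k)) = (j = k) :=
      fun j => propext ⟨fun h => ee_inj (neg_inj.1 h), fun h => by rw [h]⟩
    simp only [he]
    simp
  have h3 : (if (0 : GG d) = -(ee d k) then lam else 0) = 0 :=
    if_neg fun h => ee_ne_zero k (neg_eq_zero.1 h.symm)
  rw [h1, h2, h3, zero_add, add_zero]

lemma chP_at_zero (ρ : Fin d → ℂ) (lam : ℂ) : (chP ρ lam).coeff 0 = lam := by
  rw [chP_apply]
  have h1 : (∑ j, if ee d j = (0 : GG d) then ρ j else 0) = 0 :=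
    Finset.sum_eq_zero fun j _ => if_neg (ee_ne_zero j)
  have h2 : (∑ j, if -(ee d j) = (0 : GG d) then (ρ j)⁻¹ else 0) = 0 :=
    Finset.sum_eq_zero fun j _ => if_neg fun h => ee_ne_zero j (neg_eq_zero.1 h)
  rw [h1, h2, if_pos rfl, zero_add, zero_add]

lemma supp_chP (ρ : Fin d → ℂ) (lam : ℂ) {a : GG d} (ha : (chP ρ lam).coeff a ≠ 0) :
    a = 0 ∨ ∃ j, a = ee d j ∨ a = -(ee d j) := by
  by_contra hc
  push_neg at hc
  apply ha
  rw [chP_apply]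
  have h1 : (∑ j, if ee d j = a then ρ j else 0) = 0 :=
    Finset.sum_eq_zero fun j _ => if_neg fun h => (hc.2 j).1 h.symm
  have h2 : (∑ j, if -(ee d j) = a then (ρ j)⁻¹ else 0) = 0 :=
    Finset.sum_eq_zero fun j _ => if_neg fun h => (hc.2 j).2 h.symm
  have h3 : (if (0 : GG d) = a then lam else 0) = 0 := if_neg fun h => hc.1 h.symm
  rw [h1, h2, h3, add_zero, add_zero]

lemma fil_top_chP (ρ : Fin d → ℂ) (lam : ℂ) (k : Fin d) :
    fil (fun a => a k = 1) (chP ρ lam) = AddMonoidAlgebra.single (ee d k) (ρ k) := by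
  classical
  ext a
  rw [fil_apply, AddMonoidAlgebra.coeff_single, Finsupp.single_apply]
  by_cases h1 : a k = 1
  · rw [if_pos h1]
    by_cases h2 : ee d k = a
    · rw [if_pos h2, ← h2, chP_at_ee]
    · rw [if_neg h2]
      by_contra hne
      rcases supp_chP ρ lam hne with rfl | ⟨j, rfl | rfl⟩
      · simp at h1
      · rw [ee_apply] at h1
        split_ifs at h1 with hkj
        · exact h2 (by rw [hkj])
        · exact one_ne_zero h1.symm
      · rw [Pi.neg_apply, ee_apply] at h1
        split_ifs at h1 <;> omega
  · rw [if_neg h1, if_neg fun h2 => h1 (by rw [← h2, ee_apply, if_pos rfl])]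

lemma fil_bot_chP (ρ : Fin d → ℂ) (lam : ℂ) (k : Fin d) :
    fil (fun a => a k = -1) (chP ρ lam) = AddMonoidAlgebra.single (-(ee d k)) ((ρ k)⁻¹) := by
  classical
  ext a
  rw [fil_apply, AddMonoidAlgebra.coeff_single, Finsupp.single_apply]
  by_cases h1 : a k = -1
  · rw [if_pos h1]
    by_cases h2 : -(ee d k) = a
    · rw [if_pos h2, ← h2, chP_at_neg_ee]
    · rw [if_neg h2]
      by_contra hne
      rcases supp_chP ρ lam hne with rfl | ⟨j, rfl | rfl⟩
      · simp at h1
      · rw [ee_apply] at h1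
        split_ifs at h1 <;> omega
      · rw [Pi.neg_apply, ee_apply] at h1
        split_ifs at h1 with hkj
        exact h2 (by rw [hkj])
  · rw [if_neg h1, if_neg fun h2 => h1
      (by rw [← h2, Pi.neg_apply, ee_apply, if_pos rfl])]

lemma single_mul_single' (a b : GG d) (A B : ℂ) :
    HMul.hMul (α := AA d) (β := AA d) (γ := AA d)
      (AddMonoidAlgebra.single a A) (AddMonoidAlgebra.single b B) = AddMonoidAlgebra.single (a + b) (A * B) :=
  AddMonoidAlgebra.single_mul_single _ _ _ _

lemma Ehom_single (w : Fin d → ℂˣ) (a : GG d) (C : ℂ) :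
    Ehom w (AddMonoidAlgebra.single a C : AA d) = C * ∏ j, ((w j ^ a j : ℂˣ) : ℂ) := by
  rw [Ehom_apply]
  exact Finsupp.sum_single_index (by rw [zero_mul])

lemma prod_w_ee (w : Fin d → ℂˣ) (k : Fin d) :
    (∏ j, ((w j ^ (ee d k) j : ℂˣ) : ℂ)) = (w k : ℂ) := by
  rw [Finset.prod_eq_single k]
  · rw [ee_apply, if_pos rfl, zpow_one]
  · intro j _ hj
    rw [ee_apply, if_neg hj, zpow_zero, Units.val_one]
  · intro h
    exact absurd (Finset.mem_univ k) h

lemma prod_w_neg_ee (w : Fin d → ℂˣ) (k : Fin d) :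
    (∏ j, ((w j ^ (-(ee d k)) j : ℂˣ) : ℂ)) = (w k : ℂ)⁻¹ := by
  rw [Finset.prod_eq_single k]
  · rw [Pi.neg_apply, ee_apply, if_pos rfl]
    rw [zpow_neg, zpow_one, Units.val_inv_eq_inv_val]
  · intro j _ hj
    rw [Pi.neg_apply, ee_apply, if_neg hj, neg_zero, zpow_zero, Units.val_one]
  · intro h
    exact absurd (Finset.mem_univ k) h

lemma Ehom_chP (ρ : Fin d → ℂ) (lam : ℂ) (w : Fin d → ℂˣ) :
    Ehom w (chP ρ lam) = (∑ j, (ρ j * (w j : ℂ) + (ρ j * (w j : ℂ))⁻¹)) + lam := by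
  rw [chP, map_add, map_add, map_sum, map_sum, Ehom_single]
  have h0 : (∏ j, ((w j ^ (0 : GG d) j : ℂˣ) : ℂ)) = 1 := by
    refine Finset.prod_eq_one fun j _ => ?_
    show ((w j ^ (0:ℤ) : ℂˣ) : ℂ) = 1
    rw [zpow_zero, Units.val_one]
  rw [h0, mul_one]
  congr 1
  have h1 : ∀ j : Fin d, Ehom w (AddMonoidAlgebra.single (ee d j) (ρ j) : AA d) = ρ j * (w j : ℂ) :=
    fun j => by rw [Ehom_single, prod_w_ee]
  have h2 : ∀ j : Fin d, Ehom w (AddMonoidAlgebra.single (-(ee d j)) ((ρ j)⁻¹) : AA d)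
      = (ρ j * (w j : ℂ))⁻¹ := fun j => by
    rw [Ehom_single, prod_w_neg_ee, mul_inv]
  rw [Finset.sum_congr rfl fun j _ => h1 j, Finset.sum_congr rfl fun j _ => h2 j,
    ← Finset.sum_add_distrib]

lemma mono_of_single (c : AA d) (F : (Fin d → ℂ) → ℂ)
    (hF : ∀ z : Fin d → ℂ, (∀ j, z j ≠ 0) → F z = c.coeff.sum fun a C => C * ∏ j, z j ^ a j)
    (α : GG d) (A : ℂ) (hA : A ≠ 0) (hc : c = AddMonoidAlgebra.single α A) : IsMonomial F := by
  refine ⟨A, α, hA, fun z hz => ?_⟩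
  rw [hF z hz, hc, AddMonoidAlgebra.coeff_single, Finsupp.sum_single_index (by rw [zero_mul])]

lemma main_irred {d : ℕ} (hd : 2 ≤ d) (ρ : Fin d → ℂ) (hρ : ∀ j, ρ j ≠ 0) (lam : ℂ)
    (hcase : 3 ≤ d ∨ lam ≠ 0) :
    LaurentIrreducible (fun z : Fin d → ℂ => (∑ j, (ρ j * z j + (ρ j * z j)⁻¹)) + lam) := by
  classical
  rintro ⟨f, g, ⟨cf0, hcf⟩, ⟨cg0, hcg⟩, hfm, hgm, hmul⟩
  set cf : AA d := AddMonoidAlgebra.ofCoeff cf0 with hcfs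
  set cg : AA d := AddMonoidAlgebra.ofCoeff cg0 with hcgs
  let j0 : Fin d := ⟨0, by omega⟩
  let j1 : Fin d := ⟨1, by omega⟩
  -- identify the coefficients of the product
  have heq : cf * cg = chP ρ lam := by
    apply rep_eq
    intro w
    have hz0 : ∀ j, ((w j : ℂ)) ≠ 0 := fun j => Units.ne_zero (w j)
    have hwz : (fun j => Units.mk0 ((w j : ℂ)) (hz0 j)) = w := by
      funext j; exact Units.ext rfl
    have e1 : Ehom w cf = f (fun j => (w j : ℂ)) := by
      rw [hcf (fun j => (w j : ℂ)) hz0, ← AddMonoidAlgebra.coeff_ofCoeff cf0, E_eq _ hz0, hwz]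
    have e2 : Ehom w cg = g (fun j => (w j : ℂ)) := by
      rw [hcg (fun j => (w j : ℂ)) hz0, ← AddMonoidAlgebra.coeff_ofCoeff cg0, E_eq _ hz0, hwz]
    rw [map_mul, e1, e2, Ehom_chP]
    exact (hmul _ hz0).symm
  set π : GG d →+ ℤ := Pi.evalAddMonoidHom (fun _ : Fin d => ℤ) j0 with hπdef
  have hπa : ∀ a : GG d, π a = a j0 := fun a => rfl
  have hch0 : chP ρ lam ≠ 0 := by
    intro h0
    apply hρ j0
    rw [← chP_at_ee ρ lam j0, h0, AddMonoidAlgebra.coeff_zero, Finsupp.coe_zero, Pi.zero_apply]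
  have hf0 : (cf : AA d) ≠ 0 := fun h' => hch0 (by rw [← heq, h', zero_mul])
  have hg0 : (cg : AA d) ≠ 0 := fun h' => hch0 (by rw [← heq, h', mul_zero])
  obtain ⟨Mf, mf, hmf, hbf, hexMf, hexmf⟩ := exists_bounds π hf0
  obtain ⟨Mg, mg, hmg, hbg, hexMg, hexmg⟩ := exists_bounds π hg0
  have hsuppb : ∀ a ∈ (chP ρ lam).coeff.support, -1 ≤ π a ∧ π a ≤ 1 := by
    intro a ha
    rcases supp_chP ρ lam (Finsupp.mem_support_iff.1 ha) with rfl | ⟨j, rfl | rfl⟩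
    · rw [hπa]; simp
    · rw [hπa, ee_apply]; split_ifs <;> omega
    · rw [hπa, Pi.neg_apply, ee_apply]; split_ifs <;> omega
  have heeval : π (ee d j0) = 1 := by rw [hπa, ee_apply, if_pos rfl]
  have hneeval : π (-(ee d j0)) = -1 := by
    rw [hπa, Pi.neg_apply, ee_apply, if_pos rfl]
  have heeS : ee d j0 ∈ (chP ρ lam).coeff.support :=
    Finsupp.mem_support_iff.2 (by rw [chP_at_ee]; exact hρ j0)
  have hneeS : -(ee d j0) ∈ (chP ρ lam).coeff.support :=
    Finsupp.mem_support_iff.2 (by rw [chP_at_neg_ee]; exact inv_ne_zero (hρ j0))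
  -- Mf + Mg = 1
  have hMsum : Mf + Mg = 1 := by
    obtain ⟨a, ha, ha'⟩ := top_mul_mem π cf cg Mf Mg (fun a ha => (hbf a ha).1)
      (fun a ha => (hbg a ha).1) hexMf hexMg
    rw [heq] at ha
    have h1 := hsuppb a ha
    have h2 : π (ee d j0) ≤ Mf + Mg := by
      rw [← heq] at heeS
      obtain ⟨b, hb, c, hc, hbc⟩ := mem_support_mul heeS
      have hb' := (hbf b hb).1
      have hc' := (hbg c hc).1
      rw [← hbc, map_add]
      omega
    omega
  -- mf + mg = -1
  have hmsum : mf + mg = -1 := by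
    obtain ⟨a, ha, ha'⟩ := bot_mul_mem π cf cg mf mg (fun a ha => (hbf a ha).2)
      (fun a ha => (hbg a ha).2) hexmf hexmg
    rw [heq] at ha
    have h1 := hsuppb a ha
    have h2 : mf + mg ≤ π (-(ee d j0)) := by
      rw [← heq] at hneeS
      obtain ⟨b, hb, c, hc, hbc⟩ := mem_support_mul hneeS
      have hb' := (hbf b hb).2
      have hc' := (hbg c hc).2
      rw [← hbc, map_add]
      omega
    omega
  -- top and bottom slice equations
  have htop := top_mul π cf cg Mf Mg (fun a ha => (hbf a ha).1) (fun a ha => (hbg a ha).1)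
  rw [heq, hMsum] at htop
  have htopf : fil (fun a => π a = 1) (chP ρ lam) = AddMonoidAlgebra.single (ee d j0) (ρ j0) := by
    rw [fil_congr (q := fun a : GG d => a j0 = 1) fun a _ => by rw [hπa]]
    exact fil_top_chP ρ lam j0
  rw [htopf] at htop
  have hbot := bot_mul π cf cg mf mg (fun a ha => (hbf a ha).2) (fun a ha => (hbg a ha).2)
  rw [heq, hmsum] at hbot
  have hbotf : fil (fun a => π a = -1) (chP ρ lam)
      = AddMonoidAlgebra.single (-(ee d j0)) ((ρ j0)⁻¹) := by
    rw [fil_congr (q := fun a : GG d => a j0 = -1) fun a _ => by rw [hπa]]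
    exact fil_bot_chP ρ lam j0
  rw [hbotf] at hbot
  have hcases : Mf = mf ∨ Mg = mg ∨ (Mf = mf + 1 ∧ Mg = mg + 1) := by omega
  rcases hcases with hMfm | hMgm | ⟨hMfm, hMgm⟩
  · -- f has width 0, hence is a monomial
    have hffil : fil (fun a => π a = Mf) cf = cf :=
      fil_eq_self_of fun a ha => by have := hbf a ha; omega
    rw [hffil] at htop
    obtain ⟨⟨α, A, hA, hsf⟩, -⟩ := eq_single_of_mul_eq_single (hρ j0) htop.symm
    exact hfm (mono_of_single cf f hcf α A hA hsf)
  · -- g has width 0, hence is a monomial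
    have hgfil : fil (fun a => π a = Mg) cg = cg :=
      fil_eq_self_of fun a ha => by have := hbg a ha; omega
    rw [hgfil] at htop
    obtain ⟨-, ⟨β, B, hB, hsg⟩⟩ := eq_single_of_mul_eq_single (hρ j0) htop.symm
    exact hgm (mono_of_single cg g hcg β B hB hsg)
  · -- both have width 1
    obtain ⟨⟨α, A, hA, hTf⟩, ⟨β, B, hB, hTg⟩⟩ := eq_single_of_mul_eq_single (hρ j0) htop.symm
    obtain ⟨⟨α', A', hA', hBf⟩, ⟨β', B', hB', hBg⟩⟩ :=
      eq_single_of_mul_eq_single (inv_ne_zero (hρ j0)) hbot.symm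
    have hαβ : α + β = ee d j0 ∧ A * B = ρ j0 := by
      rw [hTf, hTg, single_mul_single'] at htop
      rcases AddMonoidAlgebra.single_inj.1 htop.symm with ⟨h1, h2⟩ | ⟨h1, h2⟩
      · exact ⟨h1, h2⟩
      · exact absurd h2 (hρ j0)
    have hα'β' : α' + β' = -(ee d j0) ∧ A' * B' = (ρ j0)⁻¹ := by
      rw [hBf, hBg, single_mul_single'] at hbot
      rcases AddMonoidAlgebra.single_inj.1 hbot.symm with ⟨h1, h2⟩ | ⟨h1, h2⟩
      · exact ⟨h1, h2⟩
      · exact absurd h2 (inv_ne_zero (hρ j0))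
    -- decompose cf and cg
    have hnegf : fil (fun a => ¬ π a = Mf) cf = fil (fun a => π a = mf) cf :=
      fil_congr fun a ha => by have := hbf a ha; omega
    have hnegg : fil (fun a => ¬ π a = Mg) cg = fil (fun a => π a = mg) cg :=
      fil_congr fun a ha => by have := hbg a ha; omega
    have hcf2 : (cf : AA d) = AddMonoidAlgebra.single α A + AddMonoidAlgebra.single α' A' := by
      conv_lhs => rw [← fil_pos_add_neg (fun a => π a = Mf) cf]
      rw [hnegf, hTf, hBf]
    have hcg2 : (cg : AA d) = AddMonoidAlgebra.single β B + AddMonoidAlgebra.single β' B' := by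
      conv_lhs => rw [← fil_pos_add_neg (fun a => π a = Mg) cg]
      rw [hnegg, hTg, hBg]
    -- expand the product
    have hexp : AddMonoidAlgebra.single (α + β) (A * B) + AddMonoidAlgebra.single (α + β') (A * B')
        + AddMonoidAlgebra.single (α' + β) (A' * B) + AddMonoidAlgebra.single (α' + β') (A' * B')
        = chP ρ lam := by
      rw [← heq, hcf2, hcg2, add_mul, mul_add, mul_add,
        single_mul_single', single_mul_single', single_mul_single', single_mul_single']
      abel
    -- coefficient extraction at points with vanishing j0 coordinate
    have hmem : ∀ v : GG d, v j0 = 0 → (chP ρ lam).coeff v ≠ 0 → α + β' = v ∨ α' + β = v := by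
      intro v hv hnz
      by_contra hc
      push_neg at hc
      apply hnz
      rw [← hexp, AddMonoidAlgebra.coeff_add, AddMonoidAlgebra.coeff_add, AddMonoidAlgebra.coeff_add,
        AddMonoidAlgebra.coeff_single, AddMonoidAlgebra.coeff_single, AddMonoidAlgebra.coeff_single,
        AddMonoidAlgebra.coeff_single, Finsupp.add_apply, Finsupp.add_apply, Finsupp.add_apply,
        Finsupp.single_apply, Finsupp.single_apply, Finsupp.single_apply,
        Finsupp.single_apply]
      have h1 : ¬(α + β = v) := by
        intro h
        rw [hαβ.1] at h
        rw [← h, ee_apply, if_pos rfl] at hv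
        omega
      have h2 : ¬(α' + β' = v) := by
        intro h
        rw [hα'β'.1] at h
        rw [← h, Pi.neg_apply, ee_apply, if_pos rfl] at hv
        omega
      rw [if_neg h1, if_neg h2, if_neg hc.1, if_neg hc.2]
      ring
    -- the two middle exponents are opposite
    have hopp : (α' + β) j1 = -((α + β') j1) := by
      have hsum : (α + β') + (α' + β) = 0 := by
        have h' : (α + β') + (α' + β) = (α + β) + (α' + β') := by abel
        rw [h', hαβ.1, hα'β'.1, add_neg_cancel]
      have := congrFun hsum j1
      rw [Pi.add_apply] at this
      simp only [Pi.zero_apply] at this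
      omega
    have hj1j0 : (ee d j1) j0 = 0 := by
      rw [ee_apply, if_neg]
      intro h
      have : (0 : ℕ) = 1 := congrArg Fin.val h
      omega
    have h1 := hmem (ee d j1) hj1j0 (by rw [chP_at_ee]; exact hρ j1)
    have hval1 : (α + β') j1 = 1 ∨ (α' + β) j1 = 1 := by
      rcases h1 with h | h
      · left; rw [h, ee_apply, if_pos rfl]
      · right; rw [h, ee_apply, if_pos rfl]
    have hval0 : (α + β') j1 = 0 ∨ (α' + β) j1 = 0 := by
      rcases hcase with hd3 | hlam
      · let j2 : Fin d := ⟨2, by omega⟩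
        have hj2j0 : (ee d j2) j0 = 0 := by
          rw [ee_apply, if_neg]
          intro h
          have : (0 : ℕ) = 2 := congrArg Fin.val h
          omega
        have hj2j1 : (ee d j2) j1 = 0 := by
          rw [ee_apply, if_neg]
          intro h
          have : (1 : ℕ) = 2 := congrArg Fin.val h
          omega
        have h3 := hmem (ee d j2) hj2j0 (by rw [chP_at_ee]; exact hρ j2)
        rcases h3 with h | h
        · left; rw [h]; exact hj2j1
        · right; rw [h]; exact hj2j1
      · have h3 := hmem 0 (by simp) (by rw [chP_at_zero]; exact hlam)
        rcases h3 with h | h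
        · left; rw [h]; simp
        · right; rw [h]; simp
    omega

end St8

theorem statement8' (d : ℕ) (ρ : Fin d → ℂ) (hρ : ∀ j, ρ j ≠ 0) (lam : ℂ) :
    (3 ≤ d →
      LaurentIrreducible (fun z : Fin d → ℂ =>
        (∑ j, (ρ j * z j + (ρ j * z j)⁻¹)) + lam)) ∧
    (d = 2 → lam ≠ 0 →
      LaurentIrreducible (fun z : Fin d → ℂ =>
        (∑ j, (ρ j * z j + (ρ j * z j)⁻¹)) + lam)) := by
  constructor
  · intro hd3
    exact St8.main_irred (by omega) ρ hρ lam (Or.inl hd3)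
  · intro hd2 hlam
    exact St8.main_irred (by omega) ρ hρ lam (Or.inr hlam)



/-- Let `ρ₁, …, ρ_d` be nonzero complex numbers and `λ ∈ ℂ`.
If `d ≥ 3`, the Laurent polynomial `Σⱼ (ρⱼ zⱼ + 1/(ρⱼ zⱼ)) + λ` is irreducible.
If `d = 2` and `λ ≠ 0`, then `ρ₁ z₁ + 1/(ρ₁ z₁) + ρ₂ z₂ + 1/(ρ₂ z₂) + λ`
is irreducible. -/
theorem statement8 (d : ℕ) (ρ : Fin d → ℂ) (hρ : ∀ j, ρ j ≠ 0) (lam : ℂ) :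
    (3 ≤ d →
      LaurentIrreducible (fun z : Fin d → ℂ =>
        (∑ j, (ρ j * z j + (ρ j * z j)⁻¹)) + lam)) ∧
    (d = 2 → lam ≠ 0 →
      LaurentIrreducible (fun z : Fin d → ℂ =>
        (∑ j, (ρ j * z j + (ρ j * z j)⁻¹)) + lam)) :=
  statement8' d ρ hρ lam

end
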